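/- Let (X,T) be a topological dynamical system with X compact, and let c_S^n = 2^{-n}. Then sup_𝒰 Asc(X,𝒰,T) = h_top(X,T), where the supremum is over all finite open covers 𝒰 of X. Moreover sup_𝒰 Int(X,𝒰,T) = h_top(X,T). -/

import Mathlib

/-- Minimal cardinality of a finite subcover of the family `U` covering all of `X`. -/
noncomputable def coverN {X : Type*} (U : Set (Set X)) : ℕ :=
  sInf {m : ℕ | ∃ V : Finset (Set X),
    ↑V ⊆ U ∧ V.card = m ∧ ⋃₀ (V : Set (Set X)) = Set.univ}

/-- The join `𝒰_S = ⋁_{i ∈ S} T^{-i} 𝒰`. -/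
def coverJoin {X : Type*} (T : X → X) (U : Set (Set X)) (S : Finset ℕ) : Set (Set X) :=
  {A | ∃ f : ℕ → Set X, (∀ i ∈ S, f i ∈ U) ∧ A = ⋂ i ∈ S, T^[i] ⁻¹' f i}

/-- Topological average sample complexity of `T` with respect to the cover `U`,
with uniform coefficients `c_S^n = 2^{-n}` (the limit equals the infimum by
subadditivity). -/
noncomputable def ascVal {X : Type*} (T : X → X) (U : Set (Set X)) : ℝ :=
  ⨅ n : ℕ+, (2 ^ (n : ℕ) : ℝ)⁻¹ *
    (∑ S ∈ (Finset.range (n : ℕ)).powerset,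
      Real.log (coverN (coverJoin T U S))) / (n : ℕ)

/-- Topological entropy of `T` relative to the cover `U` (the limit equals the
infimum by Fekete's lemma). -/
noncomputable def covEnt {X : Type*} (T : X → X) (U : Set (Set X)) : ℝ :=
  ⨅ n : ℕ+, Real.log (coverN (coverJoin T U (Finset.range (n : ℕ)))) / (n : ℕ)

set_option linter.unusedSectionVars false
set_option maxHeartbeats 1000000

namespace AscAux

variable {X : Type*}

/-- The defining set of `coverN`. -/
def covSet (U : Set (Set X)) : Set ℕ :=
  {m : ℕ | ∃ V : Finset (Set X),
    ↑V ⊆ U ∧ V.card = m ∧ ⋃₀ (V : Set (Set X)) = Set.univ}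

lemma coverN_eq (U : Set (Set X)) : coverN U = sInf (covSet U) := rfl

lemma coverN_le {U : Set (Set X)} {m : ℕ} (hm : m ∈ covSet U) : coverN U ≤ m :=
  Nat.sInf_le hm

lemma coverN_mem {U : Set (Set X)} (h : (covSet U).Nonempty) : coverN U ∈ covSet U :=
  Nat.sInf_mem h

lemma one_le_of_mem [Nonempty X] {U : Set (Set X)} {m : ℕ} (hm : m ∈ covSet U) : 1 ≤ m := by
  rcases hm with ⟨V, -, rfl, hcov⟩
  rcases Nat.eq_zero_or_pos V.card with h0 | h1
  · exfalso
    rw [Finset.card_eq_zero] at h0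
    subst h0
    simp only [Finset.coe_empty, Set.sUnion_empty] at hcov
    exact (Set.univ_nonempty).ne_empty hcov.symm
  · exact h1

lemma one_le_coverN [Nonempty X] {U : Set (Set X)} (h : (covSet U).Nonempty) :
    1 ≤ coverN U := one_le_of_mem (coverN_mem h)

lemma log_coverN_nonneg [Nonempty X] {U : Set (Set X)} (h : (covSet U).Nonempty) :
    0 ≤ Real.log (coverN U) := by
  apply Real.log_nonneg
  exact_mod_cast one_le_coverN h

/-- Compactness: an open cover has a finite subcover, i.e. `covSet` is nonempty. -/
lemma covSet_nonempty [TopologicalSpace X] [CompactSpace X] {U : Set (Set X)}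
    (hO : ∀ A ∈ U, IsOpen A) (hc : ⋃₀ U = Set.univ) : (covSet U).Nonempty := by
  classical
  have hcov : (Set.univ : Set X) ⊆ ⋃ A : U, (A : Set X) := by
    rw [← Set.sUnion_eq_iUnion, hc]
  obtain ⟨t, ht⟩ := isCompact_univ.elim_finite_subcover (fun A : U => (A : Set X))
    (fun A => hO A A.2) hcov
  refine ⟨(t.image Subtype.val).card, t.image Subtype.val, ?_, rfl, ?_⟩
  · intro A hA
    simp only [Finset.coe_image, Set.mem_image, Finset.mem_coe] at hA
    rcases hA with ⟨B, -, rfl⟩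
    exact B.2
  · apply Set.eq_univ_of_univ_subset
    intro x hx
    have := ht hx
    simp only [Set.mem_iUnion] at this
    rcases this with ⟨A, hAt, hxA⟩
    refine ⟨A, ?_, hxA⟩
    simp only [Finset.coe_image, Set.mem_image, Finset.mem_coe]
    exact ⟨A, hAt, rfl⟩

/-- Refinement: if every element of `V'` is contained in some element of `W`,
and `V'` admits a finite subcover, then `coverN W ≤ coverN V'`. -/
lemma coverN_le_of_refines {V' W : Set (Set X)}
    (href : ∀ A ∈ V', ∃ B ∈ W, A ⊆ B) (hne : (covSet V').Nonempty) :
    coverN W ≤ coverN V' := by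
  obtain ⟨V, hVsub, hcard, hcov⟩ := coverN_mem hne
  classical
  have hφ : ∀ A ∈ V, ∃ B ∈ W, A ⊆ B := fun A hA => href A (hVsub hA)
  choose φ hφW hφsub using hφ
  let W' : Finset (Set X) := V.attach.image (fun A => φ A.1 A.2)
  have hW'sub : ↑W' ⊆ W := by
    intro B hB
    simp only [W', Finset.coe_image, Set.mem_image, Finset.mem_coe, Finset.mem_attach] at hB
    rcases hB with ⟨A, -, rfl⟩
    exact hφW _ _
  have hW'cov : ⋃₀ (W' : Set (Set X)) = Set.univ := by
    apply Set.eq_univ_of_univ_subset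
    intro x hx
    have : x ∈ ⋃₀ (V : Set (Set X)) := hcov ▸ Set.mem_univ x
    rcases this with ⟨A, hA, hxA⟩
    have hA' : A ∈ V := hA
    refine ⟨φ A hA', ?_, hφsub A hA' hxA⟩
    simp only [W', Finset.coe_image, Set.mem_image, Finset.mem_coe]
    exact ⟨⟨A, hA'⟩, Finset.mem_attach _ _, rfl⟩
  calc coverN W ≤ W'.card := coverN_le ⟨W', hW'sub, rfl, hW'cov⟩
    _ ≤ V.attach.card := Finset.card_image_le
    _ = V.card := Finset.card_attach
    _ = coverN V' := hcard


variable {X : Type*} [TopologicalSpace X] [CompactSpace X] {T : X → X} {U : Set (Set X)}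

lemma coverJoin_isOpen (hT : Continuous T) (hO : ∀ A ∈ U, IsOpen A) (S : Finset ℕ) :
    ∀ A ∈ coverJoin T U S, IsOpen A := by
  rintro A ⟨f, hf, rfl⟩
  exact isOpen_biInter_finset fun i hi => ((hO _ (hf i hi)).preimage (hT.iterate i))

lemma coverJoin_sUnion (hc : ⋃₀ U = Set.univ) (S : Finset ℕ) :
    ⋃₀ coverJoin T U S = Set.univ := by
  classical
  apply Set.eq_univ_of_univ_subset
  intro x _
  have hch : ∀ y : X, ∃ A ∈ U, y ∈ A := by
    intro y
    have : y ∈ ⋃₀ U := hc ▸ Set.mem_univ y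
    exact this
  choose g hgU hgy using hch
  refine ⟨⋂ i ∈ S, T^[i] ⁻¹' (g (T^[i] x)), ⟨fun i => g (T^[i] x), fun i _ => hgU _, rfl⟩, ?_⟩
  simp only [Set.mem_iInter, Set.mem_preimage]
  intro i _
  exact hgy _

lemma covSet_join_nonempty (hT : Continuous T) (hO : ∀ A ∈ U, IsOpen A)
    (hc : ⋃₀ U = Set.univ) (S : Finset ℕ) : (covSet (coverJoin T U S)).Nonempty :=
  covSet_nonempty (coverJoin_isOpen hT hO S) (coverJoin_sUnion hc S)

lemma coverN_join_mono (hT : Continuous T) (hO : ∀ A ∈ U, IsOpen A)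
    (hc : ⋃₀ U = Set.univ) {S S' : Finset ℕ} (hSS : S ⊆ S') :
    coverN (coverJoin T U S) ≤ coverN (coverJoin T U S') := by
  apply coverN_le_of_refines _ (covSet_join_nonempty hT hO hc S')
  rintro A ⟨f, hf, rfl⟩
  refine ⟨⋂ i ∈ S, T^[i] ⁻¹' f i, ⟨f, fun i hi => hf i (hSS hi), rfl⟩, ?_⟩
  intro x hx
  simp only [Set.mem_iInter] at hx ⊢
  intro i hi
  exact hx i (hSS hi)

lemma coverN_join_union_le (hT : Continuous T) (hO : ∀ A ∈ U, IsOpen A)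
    (hc : ⋃₀ U = Set.univ) {S S' : Finset ℕ} (hd : Disjoint S S') :
    coverN (coverJoin T U (S ∪ S')) ≤
      coverN (coverJoin T U S) * coverN (coverJoin T U S') := by
  classical
  obtain ⟨V, hVsub, hVcard, hVcov⟩ := coverN_mem (covSet_join_nonempty hT hO hc S)
  obtain ⟨V', hV'sub, hV'card, hV'cov⟩ := coverN_mem (covSet_join_nonempty hT hO hc S')
  have h1 : coverN (coverJoin T U (S ∪ S')) ≤
      ((V ×ˢ V').image fun p => p.1 ∩ p.2).card := by
    apply coverN_le
    refine ⟨_, ?_, rfl, ?_⟩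
    · intro B hB
      simp only [Finset.coe_image, Set.mem_image, Finset.mem_coe, Finset.mem_product] at hB
      obtain ⟨⟨A, A'⟩, ⟨hAV, hA'V⟩, rfl⟩ := hB
      obtain ⟨f, hf, rfl⟩ := hVsub hAV
      obtain ⟨g, hg, rfl⟩ := hV'sub hA'V
      refine ⟨fun i => if i ∈ S then f i else g i, ?_, ?_⟩
      · intro i hi
        rcases Finset.mem_union.1 hi with hi' | hi'
        · simp [hi', hf i hi']
        · have : i ∉ S := fun h => (Finset.disjoint_left.1 hd h) hi'
          simp [this, hg i hi']
      · ext x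
        simp only [Set.mem_inter_iff, Set.mem_iInter, Set.mem_preimage, Finset.mem_union]
        constructor
        · rintro ⟨h1, h2⟩ i hi
          rcases hi with hi | hi
          · simpa [hi] using h1 i hi
          · have hiS : i ∉ S := fun h => (Finset.disjoint_left.1 hd h) hi
            simpa [hiS] using h2 i hi
        · intro h
          constructor
          · intro i hi
            simpa [hi] using h i (Or.inl hi)
          · intro i hi
            have hiS : i ∉ S := fun h => (Finset.disjoint_left.1 hd h) hi
            simpa [hiS] using h i (Or.inr hi)
    · apply Set.eq_univ_of_univ_subset
      intro x _
      obtain ⟨A, hAV, hxA⟩ : x ∈ ⋃₀ (V : Set (Set X)) := hVcov ▸ Set.mem_univ x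
      obtain ⟨A', hA'V, hxA'⟩ : x ∈ ⋃₀ (V' : Set (Set X)) := hV'cov ▸ Set.mem_univ x
      refine ⟨A ∩ A', ?_, hxA, hxA'⟩
      simp only [Finset.coe_image, Set.mem_image, Finset.mem_coe, Finset.mem_product]
      exact ⟨(A, A'), ⟨hAV, hA'V⟩, rfl⟩
  calc coverN (coverJoin T U (S ∪ S')) ≤ ((V ×ˢ V').image fun p => p.1 ∩ p.2).card := h1
    _ ≤ (V ×ˢ V').card := Finset.card_image_le
    _ = V.card * V'.card := Finset.card_product _ _
    _ = _ := by rw [hVcard, hV'card]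

lemma coverN_join_shift_le (hT : Continuous T) (hO : ∀ A ∈ U, IsOpen A)
    (hc : ⋃₀ U = Set.univ) (S : Finset ℕ) (t : ℕ) :
    coverN (coverJoin T U (S.image (· + t))) ≤ coverN (coverJoin T U S) := by
  classical
  obtain ⟨V, hVsub, hVcard, hVcov⟩ := coverN_mem (covSet_join_nonempty hT hO hc S)
  have h1 : coverN (coverJoin T U (S.image (· + t))) ≤
      (V.image fun A => T^[t] ⁻¹' A).card := by
    apply coverN_le
    refine ⟨_, ?_, rfl, ?_⟩
    · intro B hB
      simp only [Finset.coe_image, Set.mem_image, Finset.mem_coe] at hB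
      obtain ⟨A, hAV, rfl⟩ := hB
      obtain ⟨f, hf, rfl⟩ := hVsub hAV
      refine ⟨fun m => f (m - t), ?_, ?_⟩
      · intro m hm
        obtain ⟨i, hi, rfl⟩ := Finset.mem_image.1 hm
        simpa [Nat.add_sub_cancel] using hf i hi
      · ext x
        simp only [Set.mem_preimage, Set.mem_iInter, Finset.mem_image]
        constructor
        · rintro hx m ⟨i, hi, rfl⟩
          rw [Nat.add_sub_cancel, Function.iterate_add_apply]
          exact hx i hi
        · intro hx i hi
          have := hx (i + t) ⟨i, hi, rfl⟩
          rwa [Nat.add_sub_cancel, Function.iterate_add_apply] at this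
    · apply Set.eq_univ_of_univ_subset
      intro x _
      obtain ⟨A, hAV, hxA⟩ : T^[t] x ∈ ⋃₀ (V : Set (Set X)) := hVcov ▸ Set.mem_univ _
      refine ⟨T^[t] ⁻¹' A, ?_, hxA⟩
      simp only [Finset.coe_image, Set.mem_image, Finset.mem_coe]
      exact ⟨A, hAV, rfl⟩
  calc coverN (coverJoin T U (S.image (· + t))) ≤ _ := h1
    _ ≤ V.card := Finset.card_image_le
    _ = _ := hVcard


lemma coverJoin_zero : coverJoin T U {0} = U := by
  ext A
  constructor
  · rintro ⟨f, hf, rfl⟩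
    have : ⋂ i ∈ ({0} : Finset ℕ), T^[i] ⁻¹' f i = f 0 := by
      simp
    rw [this]
    exact hf 0 (Finset.mem_singleton_self 0)
  · intro hA
    refine ⟨fun _ => A, fun i _ => hA, ?_⟩
    simp

lemma coverN_join_singleton_le (hT : Continuous T) (hO : ∀ A ∈ U, IsOpen A)
    (hc : ⋃₀ U = Set.univ) (i : ℕ) :
    coverN (coverJoin T U {i}) ≤ coverN U := by
  have h0 : ({0} : Finset ℕ).image (· + i) = {i} := by simp
  calc coverN (coverJoin T U {i})
      = coverN (coverJoin T U (({0} : Finset ℕ).image (· + i))) := by rw [h0]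
    _ ≤ coverN (coverJoin T U {0}) := coverN_join_shift_le hT hO hc _ i
    _ = coverN U := by rw [coverJoin_zero]

lemma coverN_join_le_pow (hT : Continuous T) (hO : ∀ A ∈ U, IsOpen A)
    (hc : ⋃₀ U = Set.univ) (C : Finset ℕ) :
    coverN (coverJoin T U C) ≤ coverN U ^ C.card := by
  classical
  induction C using Finset.induction with
  | empty =>
    have : coverN (coverJoin T U ∅) ≤ 1 := by
      apply coverN_le
      refine ⟨{Set.univ}, ?_, by simp, by simp⟩
      intro A hA
      simp only [Finset.coe_singleton, Set.mem_singleton_iff] at hA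
      subst hA
      exact ⟨fun _ => Set.univ, by simp, by simp⟩
    simpa using this
  | @insert i C hiC ih =>
    have hd : Disjoint ({i} : Finset ℕ) C := by simpa using hiC
    have hins : insert i C = {i} ∪ C := Finset.insert_eq i C
    calc coverN (coverJoin T U (insert i C))
        = coverN (coverJoin T U ({i} ∪ C)) := by rw [hins]
      _ ≤ coverN (coverJoin T U {i}) * coverN (coverJoin T U C) :=
          coverN_join_union_le hT hO hc hd
      _ ≤ coverN U * coverN U ^ C.card :=
          Nat.mul_le_mul (coverN_join_singleton_le hT hO hc i) ih
      _ = coverN U ^ (insert i C).card := by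
          rw [Finset.card_insert_of_notMem hiC, pow_succ, mul_comm]

/-- `S + [0,k) = {i + j : i ∈ S, j < k}`. -/
def shiftk (S : Finset ℕ) (k : ℕ) : Finset ℕ :=
  (S ×ˢ Finset.range k).image fun p => p.1 + p.2

lemma mem_shiftk {S : Finset ℕ} {k m : ℕ} :
    m ∈ shiftk S k ↔ ∃ i ∈ S, ∃ j < k, i + j = m := by
  simp only [shiftk, Finset.mem_image, Finset.mem_product, Finset.mem_range, Prod.exists]
  constructor
  · rintro ⟨i, j, ⟨hi, hj⟩, rfl⟩
    exact ⟨i, hi, j, hj, rfl⟩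
  · rintro ⟨i, hi, j, hj, rfl⟩
    exact ⟨i, j, ⟨hi, hj⟩, rfl⟩

lemma range_subset_shiftk {S : Finset ℕ} {k : ℕ} (h0 : 0 ∈ S) :
    Finset.range k ⊆ shiftk S k := by
  intro j hj
  exact mem_shiftk.2 ⟨0, h0, j, Finset.mem_range.1 hj, by omega⟩

lemma shiftk_range {n k : ℕ} (hn : 1 ≤ n) (hk : 1 ≤ k) :
    shiftk (Finset.range n) k = Finset.range (n + k - 1) := by
  ext m
  rw [mem_shiftk]
  simp only [Finset.mem_range]
  constructor
  · rintro ⟨i, hi, j, hj, rfl⟩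
    omega
  · intro hm
    by_cases h : m < n
    · exact ⟨m, h, 0, by omega, by omega⟩
    · exact ⟨n - 1, by omega, m - (n - 1), by omega, by omega⟩

/-- The key identity: the join of the refined cover `𝒰_k` over `S` has the same
minimal subcover cardinality as `𝒰_{S + [0,k)}`. -/
lemma coverN_join_join (hT : Continuous T) (hO : ∀ A ∈ U, IsOpen A)
    (hc : ⋃₀ U = Set.univ) (k : ℕ) (S : Finset ℕ) :
    coverN (coverJoin T (coverJoin T U (Finset.range k)) S)
      = coverN (coverJoin T U (shiftk S k)) := by
  classical
  have hO' : ∀ A ∈ coverJoin T U (Finset.range k), IsOpen A := coverJoin_isOpen hT hO _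
  have hc' : ⋃₀ coverJoin T U (Finset.range k) = Set.univ := coverJoin_sUnion hc _
  apply le_antisymm
  · -- every element of 𝒰_{S+[0,k)} is an element of (𝒰_k)_S
    apply coverN_le_of_refines _ (covSet_join_nonempty hT hO hc (shiftk S k))
    rintro A ⟨h, hh, rfl⟩
    refine ⟨⋂ i ∈ S, T^[i] ⁻¹' (⋂ j ∈ Finset.range k, T^[j] ⁻¹' h (i + j)), ?_, ?_⟩
    · refine ⟨fun i => ⋂ j ∈ Finset.range k, T^[j] ⁻¹' h (i + j), ?_, rfl⟩
      intro i hi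
      refine ⟨fun j => h (i + j), ?_, rfl⟩
      intro j hj
      exact hh _ (mem_shiftk.2 ⟨i, hi, j, Finset.mem_range.1 hj, rfl⟩)
    · intro x hx
      simp only [Set.mem_iInter, Set.mem_preimage] at hx ⊢
      intro i hi j hj
      have := hx _ (mem_shiftk.2 ⟨i, hi, j, Finset.mem_range.1 hj, rfl⟩)
      rw [← Function.iterate_add_apply, add_comm j i]
      exact this
  · -- every element of (𝒰_k)_S is contained in an element of 𝒰_{S+[0,k)}
    apply coverN_le_of_refines _ (covSet_join_nonempty hT hO' hc' S)
    rintro A ⟨f, hf, rfl⟩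
    have hg : ∀ i : ℕ, ∃ g : ℕ → Set X, i ∈ S →
        ((∀ j ∈ Finset.range k, g j ∈ U) ∧ f i = ⋂ j ∈ Finset.range k, T^[j] ⁻¹' g j) := by
      intro i
      by_cases hi : i ∈ S
      · obtain ⟨g, hg1, hg2⟩ := hf i hi
        exact ⟨g, fun _ => ⟨hg1, hg2⟩⟩
      · exact ⟨fun _ => ∅, fun h => absurd h hi⟩
    choose g hg using hg
    have hP : ∀ m : ℕ, ∃ p : ℕ × ℕ, m ∈ shiftk S k → p.1 ∈ S ∧ p.2 < k ∧ p.1 + p.2 = m := by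
      intro m
      by_cases hm : m ∈ shiftk S k
      · obtain ⟨i, hi, j, hj, hij⟩ := mem_shiftk.1 hm
        exact ⟨(i, j), fun _ => ⟨hi, hj, hij⟩⟩
      · exact ⟨(0, 0), fun h => absurd h hm⟩
    choose P hP using hP
    refine ⟨⋂ m ∈ shiftk S k, T^[m] ⁻¹' g (P m).1 (P m).2, ?_, ?_⟩
    · refine ⟨fun m => g (P m).1 (P m).2, ?_, rfl⟩
      intro m hm
      obtain ⟨h1, h2, h3⟩ := hP m hm
      exact (hg _ h1).1 _ (Finset.mem_range.2 h2)
    · intro x hx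
      simp only [Set.mem_iInter, Set.mem_preimage] at hx ⊢
      intro m hm
      obtain ⟨h1, h2, h3⟩ := hP m hm
      have hx1 := hx _ h1
      rw [(hg _ h1).2] at hx1
      simp only [Set.mem_iInter, Set.mem_preimage] at hx1
      have := hx1 _ (Finset.mem_range.2 h2)
      rw [← Function.iterate_add_apply, add_comm, h3] at this
      exact this

lemma geom_sum_le (n : ℕ) : ∑ m ∈ Finset.range n, ((2:ℝ) ^ (m+1))⁻¹ ≤ 1 := by
  have h : ∑ m ∈ Finset.range n, ((2:ℝ) ^ (m+1))⁻¹ = 1 - ((2:ℝ) ^ n)⁻¹ := by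
    induction n with
    | zero => simp
    | succ n ih =>
      rw [Finset.sum_range_succ, ih]
      have h2 : (2:ℝ) ^ n ≠ 0 := by positivity
      field_simp
      ring
  rw [h]
  have : (0:ℝ) ≤ ((2:ℝ) ^ n)⁻¹ := by positivity
  linarith

lemma count_le (n k : ℕ) :
    (∑ S ∈ (Finset.range n).powerset, ((Finset.range n \ shiftk S k).card : ℝ))
      ≤ (n : ℝ) * 2 ^ n / 2 ^ k + 2 ^ n := by
  classical
  have hcard : ∀ S : Finset ℕ, ((Finset.range n \ shiftk S k).card : ℝ)
      = ∑ m ∈ Finset.range n, (if m ∉ shiftk S k then (1:ℝ) else 0) := by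
    intro S
    rw [Finset.sdiff_eq_filter, Finset.card_filter]
    push_cast
    rfl
  have e1 : (∑ S ∈ (Finset.range n).powerset, ((Finset.range n \ shiftk S k).card : ℝ))
      = ∑ m ∈ Finset.range n, ∑ S ∈ (Finset.range n).powerset,
          (if m ∉ shiftk S k then (1:ℝ) else 0) := by
    rw [Finset.sum_congr rfl fun S _ => hcard S, Finset.sum_comm]
  rw [e1]
  have inner : ∀ m ∈ Finset.range n,
      (∑ S ∈ (Finset.range n).powerset, (if m ∉ shiftk S k then (1:ℝ) else 0))
        ≤ 2 ^ n / 2 ^ k + 2 ^ n / 2 ^ (m+1) := by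
    intro m hm
    have hmn : m < n := Finset.mem_range.1 hm
    set Im := (Finset.range n).filter (fun i => i ≤ m ∧ m < i + k) with hIm
    have hfil : (Finset.range n).powerset.filter (fun S => m ∉ shiftk S k)
        = (Finset.range n \ Im).powerset := by
      ext S
      simp only [Finset.mem_filter, Finset.mem_powerset, hIm]
      constructor
      · rintro ⟨hsub, hms⟩ i hi
        rw [Finset.mem_sdiff, Finset.mem_filter]
        refine ⟨hsub hi, ?_⟩
        rintro ⟨-, h1, h2⟩
        exact hms (mem_shiftk.2 ⟨i, hi, m - i, by omega, by omega⟩)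
      · intro hsub
        refine ⟨hsub.trans Finset.sdiff_subset, fun hms => ?_⟩
        obtain ⟨i, hi, j, hj, hij⟩ := mem_shiftk.1 hms
        have h2 := hsub hi
        rw [Finset.mem_sdiff, Finset.mem_filter] at h2
        exact h2.2 ⟨h2.1, by omega, by omega⟩
    have hsum : (∑ S ∈ (Finset.range n).powerset, (if m ∉ shiftk S k then (1:ℝ) else 0))
        = ((Finset.range n \ Im).powerset.card : ℝ) := by
      rw [← Finset.sum_filter, hfil]
      simp
    have hIsub : Im ⊆ Finset.range n := Finset.filter_subset _ _
    have hIcard : Im.card = min (m+1) k := by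
      have hIcc : Im = Finset.Icc (m+1-k) m := by
        ext i
        simp only [hIm, Finset.mem_filter, Finset.mem_range, Finset.mem_Icc]
        omega
      rw [hIcc, Nat.card_Icc]
      omega
    have hmin : min (m+1) k ≤ n := by omega
    have hcard2 : (Finset.range n \ Im).powerset.card = 2 ^ (n - min (m+1) k) := by
      rw [Finset.card_powerset, Finset.card_sdiff_of_subset hIsub, Finset.card_range, hIcard]
    rw [hsum, hcard2, Nat.cast_pow]
    have h2 : ((2:ℕ) ^ (n - min (m+1) k) : ℝ) = 2 ^ n / 2 ^ (min (m+1) k) := by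
      push_cast
      rw [eq_div_iff (by positivity), ← pow_add, Nat.sub_add_cancel hmin]
    rw [h2]
    rcases le_total (m+1) k with h | h
    · rw [min_eq_left h]
      have : (0:ℝ) ≤ 2 ^ n / 2 ^ k := by positivity
      linarith
    · rw [min_eq_right h]
      have : (0:ℝ) ≤ 2 ^ n / 2 ^ (m+1) := by positivity
      linarith
  calc (∑ m ∈ Finset.range n, ∑ S ∈ (Finset.range n).powerset,
          (if m ∉ shiftk S k then (1:ℝ) else 0))
      ≤ ∑ m ∈ Finset.range n, ((2:ℝ) ^ n / 2 ^ k + 2 ^ n / 2 ^ (m+1)) :=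
        Finset.sum_le_sum inner
    _ = (n : ℝ) * (2 ^ n / 2 ^ k) + 2 ^ n * ∑ m ∈ Finset.range n, ((2:ℝ) ^ (m+1))⁻¹ := by
        rw [Finset.sum_add_distrib, Finset.sum_const, Finset.card_range, Finset.mul_sum]
        simp [nsmul_eq_mul, div_eq_mul_inv]
    _ ≤ (n : ℝ) * 2 ^ n / 2 ^ k + 2 ^ n * 1 := by
        have hg := geom_sum_le n
        have h1 : (0:ℝ) ≤ (2:ℝ) ^ n := by positivity
        have := mul_le_mul_of_nonneg_left hg h1
        rw [mul_div_assoc]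
        linarith
    _ = (n : ℝ) * 2 ^ n / 2 ^ k + 2 ^ n := by ring

lemma log_coverN_join_nonneg [Nonempty X] (hT : Continuous T) (hO : ∀ A ∈ U, IsOpen A)
    (hc : ⋃₀ U = Set.univ) (S : Finset ℕ) :
    0 ≤ Real.log (coverN (coverJoin T U S)) :=
  log_coverN_nonneg (covSet_join_nonempty hT hO hc S)

lemma log_coverN_join_mono [Nonempty X] (hT : Continuous T) (hO : ∀ A ∈ U, IsOpen A)
    (hc : ⋃₀ U = Set.univ) {S S' : Finset ℕ} (hSS : S ⊆ S') :
    Real.log (coverN (coverJoin T U S)) ≤ Real.log (coverN (coverJoin T U S')) := by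
  have h1 : 1 ≤ coverN (coverJoin T U S) := one_le_coverN (covSet_join_nonempty hT hO hc S)
  apply Real.log_le_log (by exact_mod_cast Nat.lt_of_lt_of_le Nat.zero_lt_one h1)
  exact_mod_cast coverN_join_mono hT hO hc hSS

lemma ent_bddBelow [Nonempty X] (hT : Continuous T) (hO : ∀ A ∈ U, IsOpen A)
    (hc : ⋃₀ U = Set.univ) :
    BddBelow (Set.range fun n : ℕ+ =>
      Real.log (coverN (coverJoin T U (Finset.range (n : ℕ)))) / (n : ℕ)) := by
  refine ⟨0, ?_⟩
  rintro x ⟨n, rfl⟩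
  exact div_nonneg (log_coverN_join_nonneg hT hO hc _) (by positivity)

lemma covEnt_nonneg [Nonempty X] (hT : Continuous T) (hO : ∀ A ∈ U, IsOpen A)
    (hc : ⋃₀ U = Set.univ) : 0 ≤ covEnt T U :=
  le_ciInf fun n => div_nonneg (log_coverN_join_nonneg hT hO hc _) (by positivity)

lemma covEnt_le [Nonempty X] (hT : Continuous T) (hO : ∀ A ∈ U, IsOpen A)
    (hc : ⋃₀ U = Set.univ) (n : ℕ+) :
    covEnt T U ≤ Real.log (coverN (coverJoin T U (Finset.range (n : ℕ)))) / (n : ℕ) :=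
  ciInf_le (ent_bddBelow hT hO hc) n

/-- `n·h ≤ log N(𝒰_{[0,n)})`. -/
lemma nh_le_logN [Nonempty X] (hT : Continuous T) (hO : ∀ A ∈ U, IsOpen A)
    (hc : ⋃₀ U = Set.univ) (n : ℕ) (hn : 1 ≤ n) :
    (n : ℝ) * covEnt T U ≤ Real.log (coverN (coverJoin T U (Finset.range n))) := by
  have h := covEnt_le hT hO hc ⟨n, hn⟩
  have hnpos : (0:ℝ) < n := by exact_mod_cast hn
  simp only [PNat.mk_coe] at h
  rw [le_div_iff₀ hnpos] at h
  simpa [mul_comm] using h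

/-- Sub-additivity on a union: `log N(𝒰_{A ∪ B}) ≤ log N(𝒰_A) + |B| · log N(𝒰)`. -/
lemma logN_union_le [Nonempty X] (hT : Continuous T) (hO : ∀ A ∈ U, IsOpen A)
    (hc : ⋃₀ U = Set.univ) {A B : Finset ℕ} (hd : Disjoint A B) :
    Real.log (coverN (coverJoin T U (A ∪ B)))
      ≤ Real.log (coverN (coverJoin T U A)) + (B.card : ℝ) * Real.log (coverN U) := by
  have h1 : 1 ≤ coverN (coverJoin T U A) := one_le_coverN (covSet_join_nonempty hT hO hc A)
  have h2 : 1 ≤ coverN (coverJoin T U B) := one_le_coverN (covSet_join_nonempty hT hO hc B)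
  have hU1 : 1 ≤ coverN U := one_le_coverN (covSet_nonempty hO hc)
  have hle : coverN (coverJoin T U (A ∪ B)) ≤
      coverN (coverJoin T U A) * coverN (coverJoin T U B) :=
    coverN_join_union_le hT hO hc hd
  have hUB : coverN (coverJoin T U B) ≤ coverN U ^ B.card := coverN_join_le_pow hT hO hc B
  calc Real.log (coverN (coverJoin T U (A ∪ B)))
      ≤ Real.log ((coverN (coverJoin T U A) : ℝ) * (coverN (coverJoin T U B) : ℝ)) := by
        apply Real.log_le_log
        · exact_mod_cast Nat.lt_of_lt_of_le Nat.zero_lt_one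
            (one_le_coverN (covSet_join_nonempty hT hO hc (A ∪ B)))
        · exact_mod_cast hle
    _ = Real.log (coverN (coverJoin T U A)) + Real.log (coverN (coverJoin T U B)) := by
        rw [Real.log_mul (Nat.cast_ne_zero.2 (by omega)) (Nat.cast_ne_zero.2 (by omega))]
    _ ≤ Real.log (coverN (coverJoin T U A)) + (B.card : ℝ) * Real.log (coverN U) := by
        have : Real.log (coverN (coverJoin T U B)) ≤ Real.log ((coverN U : ℝ) ^ B.card) := by
          apply Real.log_le_log (by exact_mod_cast Nat.lt_of_lt_of_le Nat.zero_lt_one h2)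
          exact_mod_cast hUB
        rw [Real.log_pow] at this
        linarith

/-- The central estimate: `Asc(X, 𝒰_k, T) ≥ h_top(X,𝒰,T) - 3 log N(𝒰) / k`. -/
lemma asc_lower [Nonempty X] (hT : Continuous T) (hO : ∀ A ∈ U, IsOpen A)
    (hc : ⋃₀ U = Set.univ) (k : ℕ) (hk : 1 ≤ k) :
    covEnt T U - 3 * Real.log (coverN U) / k
      ≤ ascVal T (coverJoin T U (Finset.range k)) := by
  classical
  set h := covEnt T U with hh
  set L := Real.log (coverN U) with hL
  have hL0 : 0 ≤ L := log_coverN_nonneg (covSet_nonempty hO hc)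
  have hh0 : 0 ≤ h := covEnt_nonneg hT hO hc
  have hkpos : (0:ℝ) < k := by exact_mod_cast hk
  apply le_ciInf
  intro n
  set nn := (n : ℕ) with hnn
  have hn1 : 1 ≤ nn := n.2
  have hnpos : (0:ℝ) < nn := by exact_mod_cast hn1
  have h2pos : (0:ℝ) < 2 ^ nn := by positivity
  have hrw : (∑ S ∈ (Finset.range nn).powerset,
        Real.log (coverN (coverJoin T (coverJoin T U (Finset.range k)) S)))
      = ∑ S ∈ (Finset.range nn).powerset,
        Real.log (coverN (coverJoin T U (shiftk S k))) := by
    apply Finset.sum_congr rfl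
    intro S _
    rw [coverN_join_join hT hO hc]
  rw [hrw]
  set SS := ∑ S ∈ (Finset.range nn).powerset,
    Real.log (coverN (coverJoin T U (shiftk S k))) with hSS
  by_cases hcase : 2 * nn ≤ k
  · -- small n: use sets containing 0
    have hterm : ∀ S : Finset ℕ, 0 ∈ S →
        (k : ℝ) * h ≤ Real.log (coverN (coverJoin T U (shiftk S k))) := by
      intro S h0S
      calc (k:ℝ) * h ≤ Real.log (coverN (coverJoin T U (Finset.range k))) :=
            nh_le_logN hT hO hc k hk
        _ ≤ Real.log (coverN (coverJoin T U (shiftk S k))) :=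
            log_coverN_join_mono hT hO hc (range_subset_shiftk h0S)
    have h0mem : 0 ∈ Finset.range nn := Finset.mem_range.2 (by omega)
    set E := ((Finset.range nn).erase 0).powerset.image (insert 0) with hE
    have hEsub : E ⊆ (Finset.range nn).powerset := by
      intro S hS
      obtain ⟨S', hS', rfl⟩ := Finset.mem_image.1 hS
      rw [Finset.mem_powerset] at hS' ⊢
      exact Finset.insert_subset h0mem (hS'.trans (Finset.erase_subset _ _))
    have hstep1 : ∑ S ∈ E, Real.log (coverN (coverJoin T U (shiftk S k))) ≤ SS := by
      apply Finset.sum_le_sum_of_subset_of_nonneg hEsub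
      intro S _ _
      exact log_coverN_join_nonneg hT hO hc _
    have hstep2 : (2:ℝ) ^ (nn - 1) * ((k:ℝ) * h)
        ≤ ∑ S ∈ E, Real.log (coverN (coverJoin T U (shiftk S k))) := by
      rw [hE, Finset.sum_image ?inj]
      case inj =>
        intro a ha b hb hab
        rw [Finset.mem_coe, Finset.mem_powerset] at ha hb
        have ha0 : 0 ∉ a := fun h => Finset.notMem_erase 0 _ (ha h)
        have hb0 : 0 ∉ b := fun h => Finset.notMem_erase 0 _ (hb h)
        rw [← Finset.erase_insert ha0, hab, Finset.erase_insert hb0]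
      have hcards : (((Finset.range nn).erase 0).powerset.card : ℝ) = 2 ^ (nn - 1) := by
        rw [Finset.card_powerset, Finset.card_erase_of_mem h0mem, Finset.card_range]
        push_cast
        rfl
      calc (2:ℝ) ^ (nn - 1) * ((k:ℝ) * h)
          = ∑ _S ∈ ((Finset.range nn).erase 0).powerset, (k:ℝ) * h / 2 ^ 0 := by
            rw [Finset.sum_const, nsmul_eq_mul, hcards]
            norm_num
        _ ≤ _ := by
            apply Finset.sum_le_sum
            intro S _
            simpa using hterm _ (Finset.mem_insert_self 0 S)
    have hSSge : (2:ℝ) ^ (nn - 1) * ((k:ℝ) * h) ≤ SS := le_trans hstep2 hstep1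
    have h2e : (2:ℝ) ^ nn = 2 ^ (nn - 1) * 2 := by
      rw [← pow_succ]
      congr 1
      omega
    have hgoal2 : h - 3 * L / k ≤ (2 ^ nn)⁻¹ * (2 ^ (nn - 1) * ((k:ℝ) * h)) / nn := by
      have he : (2 ^ nn : ℝ)⁻¹ * (2 ^ (nn - 1) * ((k:ℝ) * h)) / nn = (k * h) / (2 * nn) := by
        rw [h2e]
        have h2ne : (2:ℝ) ^ (nn-1) ≠ 0 := by positivity
        field_simp
      rw [he]
      have hkh : h * (2 * nn) ≤ k * h := by
        have : (2:ℝ) * nn ≤ k := by exact_mod_cast hcase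
        nlinarith
      have : h ≤ (k * h) / (2 * nn) := by
        rw [le_div_iff₀ (by positivity)]
        linarith
      have h3Lk : 0 ≤ 3 * L / k := by positivity
      linarith
    calc h - 3 * L / k ≤ (2 ^ nn)⁻¹ * (2 ^ (nn - 1) * ((k:ℝ) * h)) / nn := hgoal2
      _ ≤ (2 ^ nn)⁻¹ * SS / nn := by gcongr
  · -- large n: gaps estimate
    push_neg at hcase
    have hterm : ∀ S ∈ (Finset.range nn).powerset,
        Real.log (coverN (coverJoin T U (Finset.range nn)))
          - ((Finset.range nn \ shiftk S k).card : ℝ) * L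
          ≤ Real.log (coverN (coverJoin T U (shiftk S k))) := by
      intro S _
      have hsub : Finset.range nn ⊆ shiftk S k ∪ (Finset.range nn \ shiftk S k) := by
        intro m hm
        rw [Finset.mem_union, Finset.mem_sdiff]
        by_cases h' : m ∈ shiftk S k
        · exact Or.inl h'
        · exact Or.inr ⟨hm, h'⟩
      have hd : Disjoint (shiftk S k) (Finset.range nn \ shiftk S k) :=
        Finset.disjoint_sdiff
      have hchain : Real.log (coverN (coverJoin T U (Finset.range nn)))
          ≤ Real.log (coverN (coverJoin T U (shiftk S k)))
              + ((Finset.range nn \ shiftk S k).card : ℝ) * L :=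
        (log_coverN_join_mono hT hO hc hsub).trans (logN_union_le hT hO hc hd)
      linarith
    set N' := Real.log (coverN (coverJoin T U (Finset.range nn))) with hN'
    have hN'h : (nn : ℝ) * h ≤ N' := nh_le_logN hT hO hc nn hn1
    have hSSge : (2:ℝ) ^ nn * N' - L * ((nn:ℝ) * 2 ^ nn / 2 ^ k + 2 ^ nn) ≤ SS := by
      have hs1 : ∑ S ∈ (Finset.range nn).powerset,
          (N' - ((Finset.range nn \ shiftk S k).card : ℝ) * L) ≤ SS :=
        Finset.sum_le_sum hterm
      have hs2 : ∑ S ∈ (Finset.range nn).powerset,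
          (N' - ((Finset.range nn \ shiftk S k).card : ℝ) * L)
          = 2 ^ nn * N' - L * ∑ S ∈ (Finset.range nn).powerset,
              ((Finset.range nn \ shiftk S k).card : ℝ) := by
        rw [Finset.sum_sub_distrib, Finset.sum_const, Finset.card_powerset,
          Finset.card_range, nsmul_eq_mul, ← Finset.sum_mul]
        push_cast
        ring
      have hcount := count_le nn k
      have : L * (∑ S ∈ (Finset.range nn).powerset,
          ((Finset.range nn \ shiftk S k).card : ℝ))
          ≤ L * ((nn:ℝ) * 2 ^ nn / 2 ^ k + 2 ^ nn) :=
        mul_le_mul_of_nonneg_left hcount hL0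
      rw [hs2] at hs1
      linarith
    have h2k : (0:ℝ) < 2 ^ k := by positivity
    have he : (2 ^ nn : ℝ)⁻¹ * ((2:ℝ) ^ nn * ((nn:ℝ) * h)
          - L * ((nn:ℝ) * 2 ^ nn / 2 ^ k + 2 ^ nn)) / nn
        = h - L / 2 ^ k - L / nn := by
      field_simp
      ring
    have hbound : h - 3 * L / k ≤ h - L / 2 ^ k - L / nn := by
      have hk2 : (k:ℝ) ≤ 2 ^ k := by exact_mod_cast (Nat.lt_two_pow_self (n := k)).le
      have hA : L / 2 ^ k ≤ L / k := by
        apply div_le_div_of_nonneg_left hL0 hkpos hk2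
      have hB : L / nn ≤ 2 * L / k := by
        rw [div_le_div_iff₀ hnpos hkpos]
        have hkc : (k:ℝ) ≤ 2 * nn := by exact_mod_cast hcase.le
        nlinarith
      have h3 : 3 * L / k = L / k + 2 * L / k := by ring
      linarith
    calc h - 3 * L / k ≤ h - L / 2 ^ k - L / nn := hbound
      _ = (2 ^ nn : ℝ)⁻¹ * ((2:ℝ) ^ nn * ((nn:ℝ) * h)
            - L * ((nn:ℝ) * 2 ^ nn / 2 ^ k + 2 ^ nn)) / nn := he.symm
      _ ≤ (2 ^ nn)⁻¹ * SS / nn := by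
          have hfinal : (2:ℝ) ^ nn * ((nn:ℝ) * h)
              - L * ((nn:ℝ) * 2 ^ nn / 2 ^ k + 2 ^ nn) ≤ SS := by
            have := mul_le_mul_of_nonneg_left hN'h h2pos.le
            linarith
          gcongr

lemma coverN_join_empty_le' : coverN (coverJoin T U ∅) ≤ 1 := by
  apply coverN_le
  refine ⟨{Set.univ}, ?_, by simp, by simp⟩
  intro A hA
  simp only [Finset.coe_singleton, Set.mem_singleton_iff] at hA
  subst hA
  exact ⟨fun _ => Set.univ, by simp, by simp⟩

/-- Submultiplicativity along multiples: `N(𝒰_{[0,n·m)}) ≤ N(𝒰_{[0,n)})^m`. -/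
lemma coverN_join_range_mul_le (hT : Continuous T) (hO : ∀ A ∈ U, IsOpen A)
    (hc : ⋃₀ U = Set.univ) (n m : ℕ) :
    coverN (coverJoin T U (Finset.range (n * m)))
      ≤ coverN (coverJoin T U (Finset.range n)) ^ m := by
  classical
  induction m with
  | zero => simpa using coverN_join_empty_le'
  | succ m ih =>
    have hun : Finset.range (n * m) ∪ (Finset.range n).image (· + n * m)
        = Finset.range (n * (m + 1)) := by
      ext x
      simp only [Finset.mem_union, Finset.mem_image, Finset.mem_range, Nat.mul_succ]
      constructor
      · rintro (hx | ⟨i, hi, rfl⟩) <;> omega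
      · intro hx
        by_cases h' : x < n * m
        · exact Or.inl h'
        · exact Or.inr ⟨x - n * m, by omega, by omega⟩
    have hd : Disjoint (Finset.range (n * m)) ((Finset.range n).image (· + n * m)) := by
      rw [Finset.disjoint_left]
      rintro x hx hx'
      obtain ⟨i, -, rfl⟩ := Finset.mem_image.1 hx'
      rw [Finset.mem_range] at hx
      omega
    calc coverN (coverJoin T U (Finset.range (n * (m + 1))))
        = coverN (coverJoin T U
            (Finset.range (n * m) ∪ (Finset.range n).image (· + n * m))) := by rw [hun]
      _ ≤ coverN (coverJoin T U (Finset.range (n * m)))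
            * coverN (coverJoin T U ((Finset.range n).image (· + n * m))) :=
          coverN_join_union_le hT hO hc hd
      _ ≤ coverN (coverJoin T U (Finset.range n)) ^ m
            * coverN (coverJoin T U (Finset.range n)) :=
          Nat.mul_le_mul ih (coverN_join_shift_le hT hO hc _ _)
      _ = coverN (coverJoin T U (Finset.range n)) ^ (m + 1) := by rw [pow_succ]

/-- Entropy of the refined cover is close to `h`. -/
lemma ent_upper [Nonempty X] (hT : Continuous T) (hO : ∀ A ∈ U, IsOpen A)
    (hc : ⋃₀ U = Set.univ) (k : ℕ) (hk : 1 ≤ k) (n₀ m : ℕ) (hn₀ : 1 ≤ n₀) (hm : 1 ≤ m) :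
    covEnt T (coverJoin T U (Finset.range k))
      ≤ Real.log (coverN (coverJoin T U (Finset.range n₀))) / n₀
        + ((k - 1 : ℕ) : ℝ) * Real.log (coverN U) / ((n₀ : ℝ) * m) := by
  classical
  have hO' : ∀ A ∈ coverJoin T U (Finset.range k), IsOpen A := coverJoin_isOpen hT hO _
  have hc' : ⋃₀ coverJoin T U (Finset.range k) = Set.univ := coverJoin_sUnion hc _
  have hnm : 1 ≤ n₀ * m := Nat.one_le_iff_ne_zero.2 (by positivity)
  have h1 : covEnt T (coverJoin T U (Finset.range k))
      ≤ Real.log (coverN (coverJoin T (coverJoin T U (Finset.range k))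
          (Finset.range (n₀ * m)))) / ((n₀ * m : ℕ) : ℝ) := by
    have := covEnt_le hT hO' hc' ⟨n₀ * m, hnm⟩
    simpa using this
  have h2 : coverN (coverJoin T (coverJoin T U (Finset.range k)) (Finset.range (n₀ * m)))
      = coverN (coverJoin T U (Finset.range (n₀ * m + k - 1))) := by
    rw [coverN_join_join hT hO hc, shiftk_range hnm hk]
  have hun : Finset.range (n₀ * m) ∪
      (Finset.range (n₀ * m + k - 1) \ Finset.range (n₀ * m))
      = Finset.range (n₀ * m + k - 1) := by
    apply Finset.union_sdiff_of_subset
    apply Finset.range_subset_range.2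
    omega
  have hdcard : (Finset.range (n₀ * m + k - 1) \ Finset.range (n₀ * m)).card = k - 1 := by
    rw [Finset.card_sdiff_of_subset (Finset.range_subset_range.2 (by omega)), Finset.card_range,
      Finset.card_range]
    omega
  have h3 : Real.log (coverN (coverJoin T U (Finset.range (n₀ * m + k - 1))))
      ≤ Real.log (coverN (coverJoin T U (Finset.range (n₀ * m))))
        + ((k - 1 : ℕ) : ℝ) * Real.log (coverN U) := by
    have := logN_union_le hT hO hc (A := Finset.range (n₀ * m))
      (B := Finset.range (n₀ * m + k - 1) \ Finset.range (n₀ * m))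
      Finset.disjoint_sdiff
    rw [hun, hdcard] at this
    exact this
  have h4 : Real.log (coverN (coverJoin T U (Finset.range (n₀ * m))))
      ≤ (m : ℝ) * Real.log (coverN (coverJoin T U (Finset.range n₀))) := by
    have hle := coverN_join_range_mul_le hT hO hc n₀ m
    have h1' : 1 ≤ coverN (coverJoin T U (Finset.range (n₀ * m))) :=
      one_le_coverN (covSet_join_nonempty hT hO hc _)
    calc Real.log (coverN (coverJoin T U (Finset.range (n₀ * m))))
        ≤ Real.log ((coverN (coverJoin T U (Finset.range n₀)) : ℝ) ^ m) := by
          apply Real.log_le_log (by exact_mod_cast Nat.lt_of_lt_of_le Nat.zero_lt_one h1')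
          exact_mod_cast hle
      _ = (m : ℝ) * Real.log (coverN (coverJoin T U (Finset.range n₀))) := Real.log_pow _ _
  have hn₀pos : (0:ℝ) < n₀ := by exact_mod_cast hn₀
  have hmpos : (0:ℝ) < m := by exact_mod_cast hm
  have hnmpos : (0:ℝ) < ((n₀ * m : ℕ) : ℝ) := by exact_mod_cast hnm
  calc covEnt T (coverJoin T U (Finset.range k))
      ≤ Real.log (coverN (coverJoin T (coverJoin T U (Finset.range k))
          (Finset.range (n₀ * m)))) / ((n₀ * m : ℕ) : ℝ) := h1
    _ = Real.log (coverN (coverJoin T U (Finset.range (n₀ * m + k - 1))))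
          / ((n₀ * m : ℕ) : ℝ) := by rw [h2]
    _ ≤ ((m : ℝ) * Real.log (coverN (coverJoin T U (Finset.range n₀)))
          + ((k - 1 : ℕ) : ℝ) * Real.log (coverN U)) / ((n₀ * m : ℕ) : ℝ) := by
        apply div_le_div_of_nonneg_right ?_ hnmpos.le
        linarith
    _ = Real.log (coverN (coverJoin T U (Finset.range n₀))) / n₀
          + ((k - 1 : ℕ) : ℝ) * Real.log (coverN U) / ((n₀ : ℝ) * m) := by
        push_cast
        field_simp

lemma coverJoin_finite (hUfin : U.Finite) (S : Finset ℕ) :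
    (coverJoin T U S).Finite := by
  classical
  haveI := hUfin.fintype
  apply Set.Finite.subset (Set.finite_range
    (fun g : {i // i ∈ S} → U => ⋂ i : {i // i ∈ S}, T^[(i : ℕ)] ⁻¹' (g i : Set X)))
  rintro A ⟨f, hf, rfl⟩
  refine ⟨fun i => ⟨f i, hf i i.2⟩, ?_⟩
  ext x
  simp only [Set.mem_iInter, Set.mem_preimage, Subtype.forall]

lemma asc_le_ent [Nonempty X] (hT : Continuous T) (hO : ∀ A ∈ U, IsOpen A)
    (hc : ⋃₀ U = Set.univ) : ascVal T U ≤ covEnt T U := by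
  apply ciInf_mono
  · refine ⟨0, ?_⟩
    rintro x ⟨n, rfl⟩
    have h0 : 0 ≤ ∑ S ∈ (Finset.range (n:ℕ)).powerset,
        Real.log (coverN (coverJoin T U S)) :=
      Finset.sum_nonneg fun S _ => log_coverN_join_nonneg hT hO hc S
    positivity
  · intro n
    set nn := (n : ℕ)
    have hn1 : 1 ≤ nn := n.2
    have hnpos : (0:ℝ) < nn := by exact_mod_cast hn1
    have hsum : (∑ S ∈ (Finset.range nn).powerset,
        Real.log (coverN (coverJoin T U S)))
        ≤ 2 ^ nn * Real.log (coverN (coverJoin T U (Finset.range nn))) := by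
      calc (∑ S ∈ (Finset.range nn).powerset, Real.log (coverN (coverJoin T U S)))
          ≤ ∑ _S ∈ (Finset.range nn).powerset,
              Real.log (coverN (coverJoin T U (Finset.range nn))) :=
            Finset.sum_le_sum fun S hS =>
              log_coverN_join_mono hT hO hc (Finset.mem_powerset.1 hS)
        _ = 2 ^ nn * Real.log (coverN (coverJoin T U (Finset.range nn))) := by
            rw [Finset.sum_const, Finset.card_powerset, Finset.card_range, nsmul_eq_mul]
            push_cast
            rfl
    have h2pos : (0:ℝ) < 2 ^ nn := by positivity
    calc (2 ^ nn : ℝ)⁻¹ * (∑ S ∈ (Finset.range nn).powerset,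
          Real.log (coverN (coverJoin T U S))) / nn
        ≤ (2 ^ nn : ℝ)⁻¹ * (2 ^ nn * Real.log (coverN (coverJoin T U (Finset.range nn)))) / nn := by
          gcongr
        _ = Real.log (coverN (coverJoin T U (Finset.range nn))) / nn := by
          field_simp

lemma coverN_of_isEmpty [IsEmpty X] (W : Set (Set X)) : coverN W = 0 := by
  have h0 : (0:ℕ) ∈ covSet W := by
    refine ⟨∅, by simp, by simp, ?_⟩
    simp only [Finset.coe_empty, Set.sUnion_empty]
    exact (Set.univ_eq_empty_iff.2 ‹_›).symm
  exact Nat.le_zero.1 (coverN_le h0)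

lemma ascVal_of_isEmpty [IsEmpty X] (T : X → X) (W : Set (Set X)) : ascVal T W = 0 := by
  unfold ascVal
  have hz : ∀ n : ℕ+, (2 ^ (n:ℕ) : ℝ)⁻¹ * (∑ S ∈ (Finset.range (n:ℕ)).powerset,
      Real.log (coverN (coverJoin T W S))) / (n:ℕ) = 0 := by
    intro n
    have he : ∀ S ∈ (Finset.range (n:ℕ)).powerset,
        Real.log (coverN (coverJoin T W S)) = 0 := by
      intro S _
      rw [coverN_of_isEmpty]
      simp
    rw [Finset.sum_congr rfl he]
    simp
  rw [iInf_congr hz]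
  exact ciInf_const

lemma covEnt_of_isEmpty [IsEmpty X] (T : X → X) (W : Set (Set X)) : covEnt T W = 0 := by
  unfold covEnt
  have hz : ∀ n : ℕ+, Real.log (coverN (coverJoin T W (Finset.range (n:ℕ)))) / (n:ℕ) = 0 := by
    intro n
    rw [coverN_of_isEmpty]
    simp
  rw [iInf_congr hz]
  exact ciInf_const

/-- The key approximation: refined covers `𝒰_k` realize the entropy of `𝒰` as an
average sample complexity, with entropy staying close. -/
lemma key_approx [Nonempty X] (hT : Continuous T) (hUfin : U.Finite)
    (hO : ∀ A ∈ U, IsOpen A) (hc : ⋃₀ U = Set.univ) {ε : ℝ} (hε : 0 < ε) :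
    ∃ U' : Set (Set X), U'.Finite ∧ (∀ A ∈ U', IsOpen A) ∧ ⋃₀ U' = Set.univ ∧
      covEnt T U - ε ≤ ascVal T U' ∧ covEnt T U' ≤ covEnt T U + ε := by
  classical
  set L := Real.log (coverN U) with hL
  have hL0 : 0 ≤ L := log_coverN_nonneg (covSet_nonempty hO hc)
  set k : ℕ := max 1 (Nat.ceil (3 * L / ε)) with hk
  have hk1 : 1 ≤ k := le_max_left _ _
  have hkpos : (0:ℝ) < k := by exact_mod_cast hk1
  have hkge : 3 * L / ε ≤ (k : ℝ) := by
    calc 3 * L / ε ≤ (Nat.ceil (3 * L / ε) : ℝ) := Nat.le_ceil _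
      _ ≤ (k : ℝ) := by exact_mod_cast le_max_right _ _
  have h3Lk : 3 * L / k ≤ ε := by
    rw [div_le_iff₀ hkpos]
    calc 3 * L = (3 * L / ε) * ε := by field_simp
      _ ≤ (k : ℝ) * ε := mul_le_mul_of_nonneg_right hkge hε.le
      _ = ε * k := mul_comm _ _
  refine ⟨coverJoin T U (Finset.range k), coverJoin_finite hUfin _,
    coverJoin_isOpen hT hO _, coverJoin_sUnion hc _, ?_, ?_⟩
  · calc covEnt T U - ε ≤ covEnt T U - 3 * L / k := by linarith
      _ ≤ ascVal T (coverJoin T U (Finset.range k)) := asc_lower hT hO hc k hk1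
  · have hlt : covEnt T U < covEnt T U + ε / 2 := by linarith
    obtain ⟨n₀, hn₀⟩ := exists_lt_of_ciInf_lt (f := fun n : ℕ+ =>
      Real.log (coverN (coverJoin T U (Finset.range (n:ℕ)))) / (n:ℕ)) hlt
    set c := ((k - 1 : ℕ) : ℝ) * L with hcdef
    have hc0 : 0 ≤ c := by positivity
    obtain ⟨m', hm'⟩ := exists_nat_gt (c / (ε / 2))
    set m := m' + 1 with hm
    have hm1 : 1 ≤ m := Nat.le_add_left _ _
    have hmge : c / (ε / 2) ≤ (m : ℝ) := by
      rw [hm]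
      push_cast
      linarith
    have hmpos : (0:ℝ) < m := by exact_mod_cast hm1
    have hn₀pos : (0:ℝ) < ((n₀ : ℕ) : ℝ) := by exact_mod_cast n₀.2
    have hcm : c / (((n₀:ℕ) : ℝ) * m) ≤ ε / 2 := by
      have h1 : c / (m : ℝ) ≤ ε / 2 := by
        rw [div_le_iff₀ hmpos]
        calc c = (c / (ε/2)) * (ε/2) := by field_simp
          _ ≤ (m : ℝ) * (ε/2) := mul_le_mul_of_nonneg_right hmge (by linarith)
          _ = ε / 2 * m := mul_comm _ _
      calc c / (((n₀:ℕ) : ℝ) * m) ≤ c / (m : ℝ) := by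
            apply div_le_div_of_nonneg_left hc0 hmpos
            calc (m:ℝ) = 1 * m := (one_mul _).symm
              _ ≤ ((n₀:ℕ) : ℝ) * m := by
                apply mul_le_mul_of_nonneg_right ?_ hmpos.le
                exact_mod_cast n₀.2
        _ ≤ ε / 2 := h1
    calc covEnt T (coverJoin T U (Finset.range k))
        ≤ Real.log (coverN (coverJoin T U (Finset.range (n₀:ℕ)))) / (n₀:ℕ)
          + ((k - 1 : ℕ) : ℝ) * L / (((n₀:ℕ) : ℝ) * m) :=
          ent_upper hT hO hc k hk1 (n₀:ℕ) m n₀.2 hm1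
      _ ≤ (covEnt T U + ε / 2) + ε / 2 := by
          have h5 := hn₀.le
          rw [← hcdef]
          linarith [hcm]
      _ = covEnt T U + ε := by ring

/-- Comparison lemma for real suprema. -/
lemma sup_eq_sup {ι : Type*} [Nonempty ι] (F G : ι → ℝ) (hFG : ∀ i, F i ≤ G i)
    (h2 : ∀ i, ∀ ε : ℝ, 0 < ε → ∃ j, G i - ε ≤ F j) :
    (⨆ i, F i) = ⨆ i, G i := by
  by_cases hb : BddAbove (Set.range G)
  · have hbF : BddAbove (Set.range F) := by
      obtain ⟨cb, hcb⟩ := hb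
      refine ⟨cb, ?_⟩
      rintro x ⟨i, rfl⟩
      exact (hFG i).trans (hcb ⟨i, rfl⟩)
    apply le_antisymm
    · exact ciSup_le fun i => (hFG i).trans (le_ciSup hb i)
    · apply ciSup_le
      intro i
      apply le_of_forall_pos_le_add
      intro ε hε
      obtain ⟨j, hj⟩ := h2 i ε hε
      calc G i ≤ F j + ε := by linarith
        _ ≤ (⨆ i, F i) + ε := by
          have := le_ciSup hbF j
          linarith
  · have hbF : ¬ BddAbove (Set.range F) := by
      rintro ⟨cb, hcb⟩
      apply hb
      refine ⟨cb + 1, ?_⟩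
      rintro x ⟨i, rfl⟩
      obtain ⟨j, hj⟩ := h2 i 1 one_pos
      have : F j ≤ cb := hcb ⟨j, rfl⟩
      linarith
    rw [Real.iSup_of_not_bddAbove hb, Real.iSup_of_not_bddAbove hbF]

end AscAux

/-- With `c_S^n = 2^{-n}`, the supremum over finite open covers of the
topological average sample complexity equals the (Adler–Konheim–McAndrew) topological
entropy `h_top(X,T) = sup_𝒰 h_top(X,𝒰,T)`, and likewise for the topological
intricacy `Int(X,𝒰,T) = 2·Asc(X,𝒰,T) − h_top(X,𝒰,T)`. -/
theorem sup_asc_eq_topEntropy {X : Type*} [TopologicalSpace X] [CompactSpace X]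
    (T : X → X) (hT : Continuous T) :
    (⨆ U : {U : Set (Set X) // U.Finite ∧ (∀ A ∈ U, IsOpen A) ∧ ⋃₀ U = Set.univ},
        ascVal T U.1)
      = (⨆ U : {U : Set (Set X) // U.Finite ∧ (∀ A ∈ U, IsOpen A) ∧ ⋃₀ U = Set.univ},
        covEnt T U.1) ∧
    (⨆ U : {U : Set (Set X) // U.Finite ∧ (∀ A ∈ U, IsOpen A) ∧ ⋃₀ U = Set.univ},
        (2 * ascVal T U.1 - covEnt T U.1))
      = (⨆ U : {U : Set (Set X) // U.Finite ∧ (∀ A ∈ U, IsOpen A) ∧ ⋃₀ U = Set.univ},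
        covEnt T U.1) := by
  classical
  haveI : Nonempty {U : Set (Set X) // U.Finite ∧ (∀ A ∈ U, IsOpen A) ∧ ⋃₀ U = Set.univ} := by
    refine ⟨⟨{Set.univ}, Set.finite_singleton _, ?_, Set.sUnion_singleton _⟩⟩
    intro A hA
    rw [Set.mem_singleton_iff] at hA
    subst hA
    exact isOpen_univ
  constructor
  · apply AscAux.sup_eq_sup
    · intro i
      rcases isEmpty_or_nonempty X with hX | hX
      · rw [AscAux.ascVal_of_isEmpty, AscAux.covEnt_of_isEmpty]
      · exact AscAux.asc_le_ent hT i.2.2.1 i.2.2.2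
    · intro i ε hε
      rcases isEmpty_or_nonempty X with hX | hX
      · refine ⟨i, ?_⟩
        rw [AscAux.ascVal_of_isEmpty, AscAux.covEnt_of_isEmpty]
        linarith
      · obtain ⟨U', hf, ho, hcov, h1, h2⟩ :=
          AscAux.key_approx hT i.2.1 i.2.2.1 i.2.2.2 hε
        exact ⟨⟨U', hf, ho, hcov⟩, h1⟩
  · apply AscAux.sup_eq_sup
    · intro i
      rcases isEmpty_or_nonempty X with hX | hX
      · rw [AscAux.ascVal_of_isEmpty, AscAux.covEnt_of_isEmpty]
        norm_num
      · have := AscAux.asc_le_ent hT i.2.2.1 i.2.2.2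
        linarith
    · intro i ε hε
      rcases isEmpty_or_nonempty X with hX | hX
      · refine ⟨i, ?_⟩
        rw [AscAux.ascVal_of_isEmpty, AscAux.covEnt_of_isEmpty]
        linarith
      · obtain ⟨U', hf, ho, hcov, h1, h2⟩ :=
          AscAux.key_approx hT i.2.1 i.2.2.1 i.2.2.2 (by linarith : (0:ℝ) < ε / 3)
        refine ⟨⟨U', hf, ho, hcov⟩, ?_⟩
        simp only
        linarith
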